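/- Every element of the braid group B_3 admits a σ_1-consistent representative word: a word containing σ_1 but not σ_1^{-1}, or containing σ_1^{-1} but not σ_1, or containing neither (in which case the element lies in the subgroup generated by σ_2). -/

import Mathlib

/-- The braid relations on `m` generators `σ_0, …, σ_{m-1}` (0-based indexing). -/
def braidRels (m : ℕ) : Set (FreeGroup (Fin m)) :=
  {r | (∃ i j : Fin m, (i : ℕ) + 1 = (j : ℕ) ∧
          r = FreeGroup.of i * FreeGroup.of j * FreeGroup.of i *
              (FreeGroup.of j * FreeGroup.of i * FreeGroup.of j)⁻¹) ∨
       (∃ i j : Fin m, (i : ℕ) + 2 ≤ (j : ℕ) ∧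
          r = FreeGroup.of i * FreeGroup.of j * (FreeGroup.of i * FreeGroup.of j)⁻¹)}

/-- The braid group `B_n`, with Artin generators indexed (0-based) by `Fin (n-1)`. -/
abbrev BraidGroup (n : ℕ) := PresentedGroup (braidRels (n - 1))

/-- The Artin generator `σ_{i+1}` in 1-based notation, i.e. the `i`-th generator 0-based;
returns `1` for out-of-range indices. -/
def braidGen (n i : ℕ) : BraidGroup n :=
  if h : i < n - 1 then PresentedGroup.of ⟨i, h⟩ else 1

/-- Evaluation of a word: a letter `(i, true)` is `σ_i` (0-based) and `(i, false)` is `σ_i⁻¹`. -/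
def evalWord (n : ℕ) (w : List (ℕ × Bool)) : BraidGroup n :=
  (w.map fun p => if p.2 then braidGen n p.1 else (braidGen n p.1)⁻¹).prod

/-- `k`-fold concatenation (power) of a word. -/
def wpow (u : List (ℕ × Bool)) (k : ℕ) : List (ℕ × Bool) :=
  (List.replicate k u).flatten

/-- The semicircular word `σ_i^ε σ_{i±1}^ε ⋯ σ_j^ε` (0-based indices, `true` = positive sign). -/
def semiWord (i j : ℕ) (ε : Bool) : List (ℕ × Bool) :=
  if i ≤ j then (List.range (j - i + 1)).map fun t => (i + t, ε)
  else (List.range (i - j + 1)).map fun t => (i - t, ε)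

/-- The semicircular move as an element of the braid group. -/
def semiMove (n i j : ℕ) (ε : Bool) : BraidGroup n := evalWord n (semiWord i j ε)

/-- Letter `σ_1` of `B_3` (0-based index 0). -/
def A : ℕ × Bool := (0, true)
/-- Letter `σ_1⁻¹`. -/
def A' : ℕ × Bool := (0, false)
/-- Letter `σ_2`. -/
def B : ℕ × Bool := (1, true)
/-- Letter `σ_2⁻¹`. -/
def B' : ℕ × Bool := (1, false)

/-- A word in the letters `σ_1^{±1}, σ_2^{±1}` of `B_3`. -/
def ValidWord3 (w : List (ℕ × Bool)) : Prop := ∀ l ∈ w, l.1 < 2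

/-- A word is geodesic if no strictly shorter word in the generators `σ_1^{±1}, σ_2^{±1}`
represents the same element of `B_3`. -/
def Geodesic3 (w : List (ℕ × Bool)) : Prop :=
  ∀ w', ValidWord3 w' → evalWord 3 w' = evalWord 3 w → w.length ≤ w'.length


section BraidCore

variable {G : Type*} [Group G]

/-- evaluation of the "tail": `evT u v [n_k, …, n_1] = u v^{n_1} ⋯ u v^{n_k}` (reversed list). -/
def evT (u v : G) : List ℤ → G
  | [] => 1
  | n :: r => evT u v r * u * v ^ n

/-- value of a form `v^{n_0} u v^{n_1} ⋯ u v^{n_k}`, with `R = [n_k, …, n_1]` reversed. -/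
def valF (u v : G) (n0 : ℤ) (R : List ℤ) : G := v ^ n0 * evT u v R

/-- the complexity measure. -/
def muF (n0 : ℤ) (R : List ℤ) : ℕ :=
  R.length + (-n0).toNat + (R.map fun n => (-n).toNat).sum

lemma valF_nil (u v : G) (n0 : ℤ) : valF u v n0 [] = v ^ n0 := by
  simp [valF, evT]

lemma valF_cons (u v : G) (n0 e : ℤ) (R : List ℤ) :
    valF u v n0 (e :: R) = valF u v n0 R * u * v ^ e := by
  simp [valF, evT, mul_assoc]

lemma valF_mul_v (u v : G) (n0 h e : ℤ) (t : List ℤ) :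
    valF u v n0 (h :: t) * v ^ e = valF u v n0 ((h + e) :: t) := by
  rw [valF_cons, valF_cons, zpow_add, mul_assoc]

lemma valF_nil_mul_v (u v : G) (n0 e : ℤ) :
    valF u v n0 [] * v ^ e = valF u v (n0 + e) [] := by
  rw [valF_nil, valF_nil, ← zpow_add]

lemma muF_cons (n0 e : ℤ) (R : List ℤ) :
    muF n0 (e :: R) = muF n0 R + 1 + (-e).toNat := by
  simp [muF]; ring

/-- multiplying a form by `g^j` on the right prepends `j` zero-handles. -/
lemma valF_mul_pow (g v : G) (n0 : ℤ) (S : List ℤ) (j : ℕ) :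
    ∃ S' : List ℤ, valF g v n0 S * g ^ j = valF g v n0 S' ∧
      muF n0 S' = muF n0 S + j ∧ S'.length = S.length + j := by
  induction j with
  | zero => exact ⟨S, by simp, by simp, by simp⟩
  | succ j ih =>
    obtain ⟨S', h1, h2, h3⟩ := ih
    refine ⟨(0 : ℤ) :: S', ?_, ?_, ?_⟩
    · rw [pow_succ, ← mul_assoc, h1, valF_cons]; simp
    · rw [muF_cons, h2]; simp; ring
    · simp [h3]; ring

variable {u v : G} (huv : u * v * u = v * u * v)

include huv in
lemma conj_key (n : ℤ) : u⁻¹ * v ^ n * u = v * u ^ n * v⁻¹ := by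
  have h1 : u⁻¹ * v * u⁻¹⁻¹ = v * u * v⁻¹ := by
    have h2 : v * u * v⁻¹ = u⁻¹ * (u * v * u) * v⁻¹ := by group
    rw [inv_inv, h2, huv]; group
  calc u⁻¹ * v ^ n * u = u⁻¹ * v ^ n * u⁻¹⁻¹ := by rw [inv_inv]
    _ = (u⁻¹ * v * u⁻¹⁻¹) ^ n := (conj_zpow).symm
    _ = (v * u * v⁻¹) ^ n := by rw [h1]
    _ = v * u ^ n * v⁻¹ := conj_zpow


lemma valF_mul_vinv (g : G) (n0 h : ℤ) (t : List ℤ) :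
    valF g v n0 (h :: t) * v⁻¹ = valF g v n0 ((h - 1) :: t) := by
  have := valF_mul_v g v n0 h (-1) t
  rw [zpow_neg_one] at this
  rw [sub_eq_add_neg]; exact this

lemma muF_dec (n0 h : ℤ) (t : List ℤ) : muF n0 ((h - 1) :: t) ≤ muF n0 (h :: t) + 1 := by
  rw [muF_cons, muF_cons]; omega

lemma bump_ex (g : G) (n0 : ℤ) (R' : List ℤ) :
    ∃ n1 R1, valF g v n0 R' * v = valF g v n1 R1 ∧ muF n1 R1 ≤ muF n0 R' ∧
      R1.length = R'.length := by
  cases R' with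
  | nil =>
    refine ⟨n0 + 1, [], ?_, ?_, rfl⟩
    · have := valF_nil_mul_v g v n0 1
      rw [zpow_one] at this; exact this
    · simp only [muF, List.length_nil, List.map_nil, List.sum_nil]; omega
  | cons h t =>
    refine ⟨n0, (h + 1) :: t, ?_, ?_, rfl⟩
    · have := valF_mul_v g v n0 h 1 t
      rw [zpow_one] at this; exact this
    · rw [muF_cons, muF_cons]; omega

include huv in
lemma HL (N : ℕ) : ∀ (m : ℕ) (n0 : ℤ) (R : List ℤ), muF n0 R < N →
    (∃ t : ℤ, valF u⁻¹ v n0 R * u ^ m = v ^ t) ∨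
    (∃ p0 S, S ≠ ([] : List ℤ) ∧ valF u⁻¹ v n0 R * u ^ m = valF u v p0 S) ∨
    (∃ q0 S, S ≠ ([] : List ℤ) ∧ valF u⁻¹ v n0 R * u ^ m = valF u⁻¹ v q0 S ∧
      muF q0 S ≤ muF n0 R) := by
  induction N using Nat.strong_induction_on with
  | _ N IHN =>
  intro m
  induction m using Nat.strong_induction_on with
  | _ m IHm =>
  intro n0 R hlt
  match m with
  | 0 =>
    cases R with
    | nil => exact Or.inl ⟨n0, by simp [valF_nil]⟩
    | cons h t =>
      exact Or.inr (Or.inr ⟨n0, h :: t, List.cons_ne_nil _ _, by simp, le_refl _⟩)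
  | (m' + 1) =>
    cases R with
    | nil =>
      obtain ⟨S', hS1, _, hS3⟩ := valF_mul_pow u v n0 [] (m' + 1)
      refine Or.inr (Or.inl ⟨n0, S', ?_, ?_⟩)
      · intro hnil; rw [hnil] at hS3; simp at hS3
      · rw [valF_nil, ← valF_nil u v n0, hS1]
    | cons nk R' =>
      -- the key unfolding
      have key : valF u⁻¹ v n0 (nk :: R') * u ^ (m' + 1)
          = valF u⁻¹ v n0 R' * v * u ^ nk * v⁻¹ * u ^ m' := by
        rw [valF_cons, pow_succ']
        calc valF u⁻¹ v n0 R' * u⁻¹ * v ^ nk * (u * u ^ m')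
            = valF u⁻¹ v n0 R' * (u⁻¹ * v ^ nk * u) * u ^ m' := by group
          _ = valF u⁻¹ v n0 R' * (v * u ^ nk * v⁻¹) * u ^ m' := by rw [conj_key huv nk]
          _ = valF u⁻¹ v n0 R' * v * u ^ nk * v⁻¹ * u ^ m' := by group
      obtain ⟨n1, R1, hB, hBmu, hBlen⟩ := bump_ex (v := v) u⁻¹ n0 R'
      have hmuc : muF n0 (nk :: R') = muF n0 R' + 1 + (-nk).toNat := muF_cons n0 nk R'
      rcases lt_trichotomy nk 0 with hnk | hnk | hnk
      · -- nk < 0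
        set j : ℕ := (-nk).toNat with hj
        have hjpos : 1 ≤ j := by omega
        have hupow : u ^ nk = (u⁻¹) ^ j := by
          rw [inv_pow, ← zpow_natCast, ← zpow_neg]
          congr 1; omega
        rw [hupow, hB] at key
        obtain ⟨S2, hP1, hP2, hP3⟩ := valF_mul_pow u⁻¹ v n1 R1 j
        rw [hP1] at key
        obtain ⟨h2, t2, rfl⟩ : ∃ h2 t2, S2 = h2 :: t2 := by
          cases S2 with
          | nil => exfalso; simp at hP3; omega
          | cons a b => exact ⟨a, b, rfl⟩
        rw [valF_mul_vinv] at key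
        have hmu2 : muF n1 ((h2 - 1) :: t2) ≤ muF n0 (nk :: R') := by
          have := muF_dec n1 h2 t2
          omega
        have := IHm m' (Nat.lt_succ_self m') n1 ((h2 - 1) :: t2) (lt_of_le_of_lt hmu2 hlt)
        rcases this with ⟨t, ht⟩ | ⟨p0, S, hS, hval⟩ | ⟨q0, S, hS, hval, hmu⟩
        · exact Or.inl ⟨t, by rw [key, ht]⟩
        · exact Or.inr (Or.inl ⟨p0, S, hS, by rw [key, hval]⟩)
        · exact Or.inr (Or.inr ⟨q0, S, hS, by rw [key, hval], le_trans hmu hmu2⟩)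
      · -- nk = 0
        subst hnk
        have key0 : valF u⁻¹ v n0 ((0:ℤ) :: R') * u ^ (m' + 1)
            = valF u⁻¹ v n0 R' * u ^ m' := by
          rw [key, zpow_zero, mul_one, mul_inv_cancel_right]
        have hmu2 : muF n0 R' ≤ muF n0 ((0:ℤ) :: R') := by omega
        have := IHm m' (Nat.lt_succ_self m') n0 R' (lt_of_le_of_lt hmu2 hlt)
        rcases this with ⟨t, ht⟩ | ⟨p0, S, hS, hval⟩ | ⟨q0, S, hS, hval, hmu⟩
        · exact Or.inl ⟨t, by rw [key0, ht]⟩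
        · exact Or.inr (Or.inl ⟨p0, S, hS, by rw [key0, hval]⟩)
        · exact Or.inr (Or.inr ⟨q0, S, hS, by rw [key0, hval], le_trans hmu hmu2⟩)
      · -- nk > 0
        set j : ℕ := nk.toNat with hj
        have hjpos : 1 ≤ j := by omega
        have hupow : u ^ nk = u ^ j := by
          rw [← zpow_natCast]; congr 1; omega
        rw [hupow, hB] at key
        cases R1 with
        | nil =>
          -- explicit positive form
          have hv : valF u⁻¹ v n1 ([] : List ℤ) = valF u v n1 [] := by
            rw [valF_nil, valF_nil]
          rw [hv] at key
          obtain ⟨S3, hP1, _, hP3⟩ := valF_mul_pow u v n1 [] j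
          rw [hP1] at key
          obtain ⟨h3, t3, rfl⟩ : ∃ h3 t3, S3 = h3 :: t3 := by
            cases S3 with
            | nil => exfalso; simp at hP3; omega
            | cons a b => exact ⟨a, b, rfl⟩
          rw [valF_mul_vinv] at key
          obtain ⟨S4, hQ1, _, hQ3⟩ := valF_mul_pow u v n1 ((h3 - 1) :: t3) m'
          rw [hQ1] at key
          refine Or.inr (Or.inl ⟨n1, S4, ?_, key⟩)
          intro hnil; rw [hnil] at hQ3; simp at hQ3; omega
        | cons a1 b1 =>
          have hmuin : muF n1 (a1 :: b1) < muF n0 (nk :: R') := by omega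
          have hrec := IHN (muF n0 (nk :: R')) hlt j n1 (a1 :: b1) hmuin
          rcases hrec with ⟨t, ht⟩ | ⟨p0, S, hS, hval⟩ | ⟨q0, S, hS, hval, hmu⟩
          · -- v^t * v⁻¹ * u^m'
            rw [ht] at key
            have : (v:G) ^ t * v⁻¹ * u ^ m' = valF u v (t - 1) [] * u ^ m' := by
              rw [valF_nil, ← zpow_sub_one]
            rw [this] at key
            obtain ⟨S5, hQ1, _, hQ3⟩ := valF_mul_pow u v (t - 1) [] m'
            rw [hQ1] at key
            cases S5 with
            | nil => exact Or.inl ⟨t - 1, by rw [key, valF_nil]⟩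
            | cons a5 b5 =>
              exact Or.inr (Or.inl ⟨t - 1, a5 :: b5, List.cons_ne_nil _ _, key⟩)
          · -- positive result
            rw [hval] at key
            obtain ⟨h6, t6, rfl⟩ : ∃ h6 t6, S = h6 :: t6 := by
              cases S with
              | nil => exact absurd rfl hS
              | cons a b => exact ⟨a, b, rfl⟩
            rw [valF_mul_vinv] at key
            obtain ⟨S7, hQ1, _, hQ3⟩ := valF_mul_pow u v p0 ((h6 - 1) :: t6) m'
            rw [hQ1] at key
            refine Or.inr (Or.inl ⟨p0, S7, ?_, key⟩)
            intro hnil; rw [hnil] at hQ3; simp at hQ3; omega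
          · -- negative result, recurse on m'
            rw [hval] at key
            obtain ⟨h8, t8, rfl⟩ : ∃ h8 t8, S = h8 :: t8 := by
              cases S with
              | nil => exact absurd rfl hS
              | cons a b => exact ⟨a, b, rfl⟩
            rw [valF_mul_vinv] at key
            have hmu8 : muF q0 ((h8 - 1) :: t8) ≤ muF n0 (nk :: R') := by
              have := muF_dec q0 h8 t8
              omega
            have := IHm m' (Nat.lt_succ_self m') q0 ((h8 - 1) :: t8)
              (lt_of_le_of_lt hmu8 hlt)
            rcases this with ⟨t, ht⟩ | ⟨p0', S', hS', hval'⟩ | ⟨q0', S', hS', hval', hmu'⟩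
            · exact Or.inl ⟨t, by rw [key, ht]⟩
            · exact Or.inr (Or.inl ⟨p0', S', hS', by rw [key, hval']⟩)
            · exact Or.inr (Or.inr ⟨q0', S', hS', by rw [key, hval'],
                le_trans hmu' hmu8⟩)



/-- `γ` has a `σ₁`-consistent representation. -/
def GoodF (u v γ : G) : Prop :=
  (∃ t : ℤ, γ = v ^ t) ∨
  (∃ p0 S, S ≠ ([] : List ℤ) ∧ γ = valF u v p0 S) ∨
  (∃ q0 S, S ≠ ([] : List ℤ) ∧ γ = valF u⁻¹ v q0 S)

lemma goodF_one (u v : G) : GoodF u v 1 := Or.inl ⟨0, by simp⟩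

lemma goodF_mul_v (u v γ : G) (e : ℤ) (hg : GoodF u v γ) : GoodF u v (γ * v ^ e) := by
  rcases hg with ⟨t, rfl⟩ | ⟨p0, S, hS, rfl⟩ | ⟨q0, S, hS, rfl⟩
  · exact Or.inl ⟨t + e, by rw [← zpow_add]⟩
  · obtain ⟨h, t, rfl⟩ : ∃ h t, S = h :: t := by
      cases S with
      | nil => exact absurd rfl hS
      | cons a b => exact ⟨a, b, rfl⟩
    exact Or.inr (Or.inl ⟨p0, (h + e) :: t, List.cons_ne_nil _ _, valF_mul_v u v p0 h e t⟩)
  · obtain ⟨h, t, rfl⟩ : ∃ h t, S = h :: t := by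
      cases S with
      | nil => exact absurd rfl hS
      | cons a b => exact ⟨a, b, rfl⟩
    exact Or.inr (Or.inr ⟨q0, (h + e) :: t, List.cons_ne_nil _ _, valF_mul_v u⁻¹ v q0 h e t⟩)

include huv in
lemma goodF_mul_u (γ : G) (hg : GoodF u v γ) : GoodF u v (γ * u) := by
  rcases hg with ⟨t, rfl⟩ | ⟨p0, S, hS, rfl⟩ | ⟨q0, S, hS, rfl⟩
  · refine Or.inr (Or.inl ⟨t, [(0 : ℤ)], List.cons_ne_nil _ _, ?_⟩)
    rw [valF_cons, valF_nil]; simp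
  · refine Or.inr (Or.inl ⟨p0, (0 : ℤ) :: S, List.cons_ne_nil _ _, ?_⟩)
    rw [valF_cons]; simp
  · have := HL huv (muF q0 S + 1) 1 q0 S (Nat.lt_succ_self _)
    rw [pow_one] at this
    rcases this with ⟨t, ht⟩ | ⟨p0, S', hS', hval⟩ | ⟨q0', S', hS', hval, _⟩
    · exact Or.inl ⟨t, ht⟩
    · exact Or.inr (Or.inl ⟨p0, S', hS', hval⟩)
    · exact Or.inr (Or.inr ⟨q0', S', hS', hval⟩)

lemma valF_v_inv (g : G) (n0 : ℤ) (R : List ℤ) :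
    valF g v⁻¹ n0 R = valF g v (-n0) (R.map (fun n => -n)) := by
  induction R with
  | nil => rw [List.map_nil, valF_nil, valF_nil, inv_zpow, ← zpow_neg]
  | cons h t ih => rw [List.map_cons, valF_cons, valF_cons, ih, inv_zpow, ← zpow_neg]

lemma goodF_inv_pair (u v γ : G) : GoodF u⁻¹ v⁻¹ γ → GoodF u v γ := by
  rintro (⟨t, rfl⟩ | ⟨p0, S, hS, rfl⟩ | ⟨q0, S, hS, rfl⟩)
  · exact Or.inl ⟨-t, by rw [inv_zpow, ← zpow_neg]⟩
  · refine Or.inr (Or.inr ⟨-p0, S.map (fun n => -n), ?_, valF_v_inv u⁻¹ p0 S⟩)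
    intro h; apply hS; simpa using h
  · refine Or.inr (Or.inl ⟨-q0, S.map (fun n => -n), ?_, ?_⟩)
    · intro h; apply hS; simpa using h
    · rw [← valF_v_inv, inv_inv]

lemma goodF_pair_symm (u v γ : G) : GoodF u v γ → GoodF u⁻¹ v⁻¹ γ := by
  intro h
  apply goodF_inv_pair
  rw [inv_inv, inv_inv]
  exact h

include huv in
lemma goodF_mul_uinv (γ : G) (hg : GoodF u v γ) : GoodF u v (γ * u⁻¹) := by
  have huv' : u⁻¹ * v⁻¹ * u⁻¹ = v⁻¹ * u⁻¹ * v⁻¹ := by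
    calc u⁻¹ * v⁻¹ * u⁻¹ = (u * v * u)⁻¹ := by group
      _ = (v * u * v)⁻¹ := by rw [huv]
      _ = v⁻¹ * u⁻¹ * v⁻¹ := by group
  exact goodF_inv_pair u v (γ * u⁻¹) (goodF_mul_u huv' γ (goodF_pair_symm u v γ hg))

omit huv in
lemma goodF_mul_vinv (γ : G) (hg : GoodF u v γ) : GoodF u v (γ * v⁻¹) := by
  have := goodF_mul_v u v γ (-1) hg
  rwa [zpow_neg_one] at this


end BraidCore


section B3Inst

private lemma h02 : (0:ℕ) < 3 - 1 := by norm_num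
private lemma h12 : (1:ℕ) < 3 - 1 := by norm_num

private lemma braidGen0_eq : braidGen 3 0 = PresentedGroup.of (⟨0, h02⟩ : Fin (3-1)) := by
  rw [braidGen, dif_pos h02]

private lemma braidGen1_eq : braidGen 3 1 = PresentedGroup.of (⟨1, h12⟩ : Fin (3-1)) := by
  rw [braidGen, dif_pos h12]

private lemma braid_rel3 :
    braidGen 3 0 * braidGen 3 1 * braidGen 3 0
      = braidGen 3 1 * braidGen 3 0 * braidGen 3 1 := by
  set i0 : Fin (3-1) := ⟨0, h02⟩
  set i1 : Fin (3-1) := ⟨1, h12⟩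
  have hr : (FreeGroup.of i0 * FreeGroup.of i1 * FreeGroup.of i0 *
      (FreeGroup.of i1 * FreeGroup.of i0 * FreeGroup.of i1)⁻¹) ∈ braidRels (3-1) :=
    Or.inl ⟨i0, i1, rfl, rfl⟩
  have hone : PresentedGroup.mk (braidRels (3-1))
      (FreeGroup.of i0 * FreeGroup.of i1 * FreeGroup.of i0 *
        (FreeGroup.of i1 * FreeGroup.of i0 * FreeGroup.of i1)⁻¹) = 1 :=
    (QuotientGroup.eq_one_iff _).mpr (Subgroup.subset_normalClosure hr)
  rw [map_mul, map_inv, map_mul, map_mul, map_mul, map_mul, mul_inv_eq_one] at hone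
  rw [braidGen0_eq, braidGen1_eq]
  exact hone

private lemma exists_good (β : BraidGroup 3) :
    GoodF (braidGen 3 0) (braidGen 3 1) β := by
  induction β using PresentedGroup.induction_on with
  | _ z =>
    have main : ∀ z : FreeGroup (Fin (3-1)), ∀ γ : BraidGroup 3,
        GoodF (braidGen 3 0) (braidGen 3 1) γ →
        GoodF (braidGen 3 0) (braidGen 3 1) (γ * PresentedGroup.mk (braidRels (3-1)) z) := by
      intro z
      refine FreeGroup.induction_on z ?_ ?_ ?_ ?_
      · intro γ h; rwa [map_one, mul_one]
      · rintro ⟨xv, hx⟩ γ h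
        match xv, hx with
        | 0, hx =>
          have : PresentedGroup.mk (braidRels (3-1)) (FreeGroup.of (⟨0, hx⟩ : Fin (3-1)))
              = braidGen 3 0 := braidGen0_eq.symm
          rw [this]
          exact goodF_mul_u braid_rel3 γ h
        | 1, hx =>
          have : PresentedGroup.mk (braidRels (3-1)) (FreeGroup.of (⟨1, hx⟩ : Fin (3-1)))
              = braidGen 3 1 := braidGen1_eq.symm
          rw [this]
          have := goodF_mul_v (braidGen 3 0) (braidGen 3 1) γ 1 h
          rwa [zpow_one] at this
        | (n+2), hx => exact absurd hx (by omega)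
      · rintro ⟨xv, hx⟩ _ γ h
        rw [map_inv]
        match xv, hx with
        | 0, hx =>
          have : PresentedGroup.mk (braidRels (3-1)) (FreeGroup.of (⟨0, hx⟩ : Fin (3-1)))
              = braidGen 3 0 := braidGen0_eq.symm
          rw [this]
          exact goodF_mul_uinv braid_rel3 γ h
        | 1, hx =>
          have : PresentedGroup.mk (braidRels (3-1)) (FreeGroup.of (⟨1, hx⟩ : Fin (3-1)))
              = braidGen 3 1 := braidGen1_eq.symm
          rw [this]
          exact goodF_mul_vinv γ h
        | (n+2), hx => exact absurd hx (by omega)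
      · intro x y ihx ihy γ h
        rw [map_mul, ← mul_assoc]
        exact ihy _ (ihx _ h)
    have := main z 1 (goodF_one _ _)
    rwa [one_mul] at this

/-- word for a power of `σ₂`. -/
def bwordW (n : ℤ) : List (ℕ × Bool) := List.replicate n.natAbs (if 0 ≤ n then B else B')

lemma evalWord_nil : evalWord 3 [] = 1 := rfl

lemma evalWord_append (w1 w2 : List (ℕ × Bool)) :
    evalWord 3 (w1 ++ w2) = evalWord 3 w1 * evalWord 3 w2 := by
  simp [evalWord]

lemma evalWord_cons (p : ℕ × Bool) (w : List (ℕ × Bool)) :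
    evalWord 3 (p :: w)
      = (if p.2 then braidGen 3 p.1 else (braidGen 3 p.1)⁻¹) * evalWord 3 w := by
  simp [evalWord]

lemma eval_bwordW (n : ℤ) : evalWord 3 (bwordW n) = (braidGen 3 1) ^ n := by
  rw [bwordW, evalWord, List.map_replicate, List.prod_replicate]
  by_cases hn : 0 ≤ n
  · rw [if_pos hn]
    show (if B.2 then braidGen 3 B.1 else (braidGen 3 B.1)⁻¹) ^ n.natAbs = _
    rw [show B = ((1 : ℕ), true) from rfl]
    simp only [if_pos]
    rw [← zpow_natCast, Int.natAbs_of_nonneg hn]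
  · rw [if_neg hn]
    show (if B'.2 then braidGen 3 B'.1 else (braidGen 3 B'.1)⁻¹) ^ n.natAbs = _
    rw [show B' = ((1 : ℕ), false) from rfl]
    simp only [Bool.false_eq_true, if_false]
    rw [inv_pow, ← zpow_natCast, ← zpow_neg]
    congr 1
    omega

/-- word for the tail of a form. -/
def twordW (s : Bool) : List ℤ → List (ℕ × Bool)
  | [] => []
  | n :: r => twordW s r ++ ((if s then A else A') :: bwordW n)

lemma eval_twordW (s : Bool) (R : List ℤ) :
    evalWord 3 (twordW s R)
      = evT (if s then braidGen 3 0 else (braidGen 3 0)⁻¹) (braidGen 3 1) R := by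
  induction R with
  | nil => rfl
  | cons n r ih =>
    rw [twordW, evalWord_append, ih, evalWord_cons, eval_bwordW, evT]
    cases s
    · rw [show ((if false then A else A') : ℕ × Bool) = ((0 : ℕ), false) from rfl]
      simp only [Bool.false_eq_true, if_false, mul_assoc]
    · rw [show ((if true then A else A') : ℕ × Bool) = ((0 : ℕ), true) from rfl]
      simp only [if_pos, mul_assoc]

lemma mem_bwordW {l : ℕ × Bool} {n : ℤ} (h : l ∈ bwordW n) : l = B ∨ l = B' := by
  rw [bwordW] at h
  have := List.eq_of_mem_replicate h
  by_cases hn : 0 ≤ n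
  · left; rwa [if_pos hn] at this
  · right; rwa [if_neg hn] at this

lemma mem_twordW {l : ℕ × Bool} {s : Bool} {R : List ℤ} (h : l ∈ twordW s R) :
    l = (if s then A else A') ∨ l = B ∨ l = B' := by
  induction R with
  | nil => simp [twordW] at h
  | cons n r ih =>
    rw [twordW, List.mem_append, List.mem_cons] at h
    rcases h with h | h | h
    · exact ih h
    · exact Or.inl h
    · exact Or.inr (mem_bwordW h)

lemma head_mem_twordW (s : Bool) (R : List ℤ) (hR : R ≠ []) :
    (if s then A else A') ∈ twordW s R := by
  cases R with
  | nil => exact absurd rfl hR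
  | cons n r =>
    rw [twordW, List.mem_append, List.mem_cons]
    exact Or.inr (Or.inl rfl)

end B3Inst

/-- every element of `B_3` admits a `σ_1`-consistent representative word:
one not containing both `σ_1` and `σ_1⁻¹`; if it contains neither, the element lies in the
subgroup generated by `σ_2`. -/
theorem stmt11 (β : BraidGroup 3) :
    ∃ w : List (ℕ × Bool), ValidWord3 w ∧ evalWord 3 w = β ∧
      (A ∉ w ∨ A' ∉ w) ∧
      (A ∉ w ∧ A' ∉ w → β ∈ Subgroup.zpowers (braidGen 3 1)) := by
  rcases exists_good β with ⟨t, hβ⟩ | ⟨p0, S, hS, hβ⟩ | ⟨q0, S, hS, hβ⟩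
  · refine ⟨bwordW t, ?_, ?_, Or.inl ?_, ?_⟩
    · intro l hl
      rcases mem_bwordW hl with rfl | rfl
      · exact (by decide : B.1 < 2)
      · exact (by decide : B'.1 < 2)
    · rw [eval_bwordW, hβ]
    · intro hA
      rcases mem_bwordW hA with h | h
      · exact absurd h (by decide)
      · exact absurd h (by decide)
    · intro _
      rw [hβ]
      exact Subgroup.mem_zpowers_iff.mpr ⟨t, rfl⟩
  · refine ⟨bwordW p0 ++ twordW true S, ?_, ?_, Or.inr ?_, ?_⟩
    · intro l hl
      rcases List.mem_append.mp hl with h | h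
      · rcases mem_bwordW h with rfl | rfl
        · exact (by decide : B.1 < 2)
        · exact (by decide : B'.1 < 2)
      · rcases mem_twordW h with rfl | rfl | rfl
        · exact (by decide : A.1 < 2)
        · exact (by decide : B.1 < 2)
        · exact (by decide : B'.1 < 2)
    · rw [evalWord_append, eval_bwordW, eval_twordW, hβ]
      rfl
    · intro hA'
      rcases List.mem_append.mp hA' with h | h
      · rcases mem_bwordW h with h | h
        · exact absurd h (by decide)
        · exact absurd h (by decide)
      · rcases mem_twordW h with h | h | h
        · exact absurd h (by decide)
        · exact absurd h (by decide)
        · exact absurd h (by decide)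
    · rintro ⟨hA, -⟩
      have hmem : A ∈ twordW true S := head_mem_twordW true S hS
      exact absurd (List.mem_append.mpr (Or.inr hmem)) hA
  · refine ⟨bwordW q0 ++ twordW false S, ?_, ?_, Or.inl ?_, ?_⟩
    · intro l hl
      rcases List.mem_append.mp hl with h | h
      · rcases mem_bwordW h with rfl | rfl
        · exact (by decide : B.1 < 2)
        · exact (by decide : B'.1 < 2)
      · rcases mem_twordW h with rfl | rfl | rfl
        · exact (by decide : A'.1 < 2)
        · exact (by decide : B.1 < 2)
        · exact (by decide : B'.1 < 2)
    · rw [evalWord_append, eval_bwordW, eval_twordW, hβ]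
      rfl
    · intro hA
      rcases List.mem_append.mp hA with h | h
      · rcases mem_bwordW h with h | h
        · exact absurd h (by decide)
        · exact absurd h (by decide)
      · rcases mem_twordW h with h | h | h
        · exact absurd h (by decide)
        · exact absurd h (by decide)
        · exact absurd h (by decide)
    · rintro ⟨-, hA'⟩
      have hmem : A' ∈ twordW false S := head_mem_twordW false S hS
      exact absurd (List.mem_append.mpr (Or.inr hmem)) hA'
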